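/- Let X be a pre-Riesz space and let P₁, …, P_m : X → X be band projections such that P_i P_j = 0 whenever i ≠ j. Then P₁ + ⋯ + P_m is also a band projection. -/

import Mathlib

open Pointwise

variable {X : Type*} [AddCommGroup X] [PartialOrder X] [IsOrderedAddMonoid X] [Module ℝ X]
    [PosSMulStrictMono ℝ X]

/-- Two elements of an ordered vector space are disjoint if the sets `{x+y, -x-y}` and
`{x-y, y-x}` have the same set of upper bounds. -/
def UDisjoint (x y : X) : Prop :=
  upperBounds ({x + y, -x - y} : Set X) = upperBounds ({x - y, y - x} : Set X)

/-- The disjoint complement `S^⊥` of a set `S`. -/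
def dComp (S : Set X) : Set X := {x : X | ∀ s ∈ S, UDisjoint x s}

/-- A band: a set equal to its double disjoint complement. -/
def IsBand (B : Set X) : Prop := B = dComp (dComp B)

/-- A projection band: a band `B` with `B ∩ B^⊥ = {0}` and `B + B^⊥ = X`. -/
def IsProjBand (B : Set X) : Prop :=
  IsBand B ∧ B ∩ dComp B = {0} ∧ ∀ x : X, ∃ b ∈ B, ∃ c ∈ dComp B, x = b + c

/-- A positive linear operator. -/
def IsPosMap (T : X →ₗ[ℝ] X) : Prop := ∀ x : X, 0 ≤ x → 0 ≤ T x

/-- A band projection: a linear projection whose range is a projection band and whose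
kernel is the disjoint complement of the range. -/
def IsBandProj (P : X →ₗ[ℝ] X) : Prop :=
  P ∘ₗ P = P ∧ IsProjBand (Set.range ⇑P) ∧ (LinearMap.ker P : Set X) = dComp (Set.range ⇑P)

/-- A pre-Riesz space: for every nonempty finite `A ⊆ X` and every `x`, if the upper bounds
of `x + A` are contained in the upper bounds of `A`, then `x ≥ 0`. -/
def IsPreRiesz (X : Type*) [AddCommGroup X] [PartialOrder X] [IsOrderedAddMonoid X] [Module ℝ X]
    [PosSMulStrictMono ℝ X] : Prop :=
  ∀ (A : Set X) (x : X), A.Finite → A.Nonempty →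
    upperBounds ((x + ·) '' A) ⊆ upperBounds A → 0 ≤ x

set_option linter.unusedSectionVars false

lemma mem_ub_pair {a b z : X} : z ∈ upperBounds ({a, b} : Set X) ↔ a ≤ z ∧ b ≤ z := by
  simp [upperBounds]

lemma udisjoint_iff {x y : X} : UDisjoint x y ↔
    ∀ z, (x + y ≤ z ∧ -x - y ≤ z) ↔ (x - y ≤ z ∧ y - x ≤ z) := by
  unfold UDisjoint
  rw [Set.ext_iff]
  exact forall_congr' fun z => by rw [mem_ub_pair, mem_ub_pair]

lemma nonneg_half {y : X} (h : 0 ≤ y + y) : 0 ≤ y := by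
  have h2 : (0:X) ≤ (2:ℝ) • y := by rwa [two_smul]
  have h3 := smul_nonneg (by norm_num : (0:ℝ) ≤ 1/2) h2
  rwa [smul_smul, show (1/2 : ℝ) * 2 = 1 by norm_num, one_smul] at h3

lemma UDisjoint.symm {x y : X} (h : UDisjoint x y) : UDisjoint y x := by
  rw [udisjoint_iff] at h ⊢
  intro z
  rw [show y + x = x + y by abel, show -y - x = -x - y by abel,
      show y - x = y - x by rfl]
  exact (h z).trans (and_comm)

lemma UDisjoint.neg_left {x y : X} (h : UDisjoint x y) : UDisjoint (-x) y := by
  rw [udisjoint_iff] at h ⊢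
  intro z
  rw [show -x + y = y - x by abel, show -(-x) - y = x - y by abel,
      show -x - y = -x - y by rfl, show y - -x = x + y by abel]
  constructor
  · rintro ⟨h1, h2⟩; exact and_comm.mp ((h z).mpr ⟨h2, h1⟩)
  · rintro ⟨h1, h2⟩; exact and_comm.mp ((h z).mp ⟨h2, h1⟩)

lemma udisjoint_zero (s : X) : UDisjoint (0 : X) s := by
  rw [udisjoint_iff]
  intro z
  rw [show (0:X) + s = s by abel, show -(0:X) - s = -s by abel,
      show (0:X) - s = -s by abel, show s - (0:X) = s by abel]
  exact and_comm

lemma UDisjoint.nonneg_parts {x y : X} (h : UDisjoint x y) (hxy : 0 ≤ x + y) :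
    0 ≤ x ∧ 0 ≤ y := by
  rw [udisjoint_iff] at h
  have hub : -x - y ≤ x + y := by
    have : -x - y = -(x + y) := by abel
    rw [this]
    exact (neg_nonpos_of_nonneg hxy).trans hxy
  obtain ⟨h1, h2⟩ := (h (x + y)).mp ⟨le_refl _, hub⟩
  constructor
  · apply nonneg_half
    have e : x + x = (x + y) - (y - x) := by abel
    rw [e]
    rwa [← sub_nonneg] at h2
  · apply nonneg_half
    have e : y + y = (x + y) - (x - y) := by abel
    rw [e]
    rwa [← sub_nonneg] at h1

lemma udisjoint_of_proj (P : X →ₗ[ℝ] X) (hp : IsPosMap P)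
    (hq : ∀ x : X, 0 ≤ x → 0 ≤ x - P x) {b c : X} (hb : P b = b) (hc : P c = 0) :
    UDisjoint b c := by
  rw [udisjoint_iff]
  intro z
  constructor
  · rintro ⟨h1, h2⟩
    -- h1 : b + c ≤ z, h2 : -b - c ≤ z
    have a1 : 0 ≤ P (z - (b + c)) := hp _ (by rwa [sub_nonneg])
    have a2 : 0 ≤ (z - (b + c)) - P (z - (b + c)) := hq _ (by rwa [sub_nonneg])
    have a3 : 0 ≤ P (z - (-b - c)) := hp _ (by rwa [sub_nonneg])
    have a4 : 0 ≤ (z - (-b - c)) - P (z - (-b - c)) := hq _ (by rwa [sub_nonneg])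
    rw [map_sub, map_add, hb, hc, add_zero] at a1 a2
    rw [map_sub, map_sub, map_neg, hb, hc, sub_zero] at a3 a4
    constructor
    · rw [← sub_nonneg]
      have e : z - (b - c) = (P z - b) + ((z - (-b - c)) - (P z - -b)) := by abel
      rw [e]; exact add_nonneg a1 a4
    · rw [← sub_nonneg]
      have e : z - (c - b) = ((z - (b + c)) - (P z - b)) + (P z - -b) := by abel
      rw [e]; exact add_nonneg a2 a3
  · rintro ⟨h1, h2⟩
    -- h1 : b - c ≤ z, h2 : c - b ≤ z
    have a1 : 0 ≤ P (z - (b - c)) := hp _ (by rwa [sub_nonneg])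
    have a2 : 0 ≤ (z - (b - c)) - P (z - (b - c)) := hq _ (by rwa [sub_nonneg])
    have a3 : 0 ≤ P (z - (c - b)) := hp _ (by rwa [sub_nonneg])
    have a4 : 0 ≤ (z - (c - b)) - P (z - (c - b)) := hq _ (by rwa [sub_nonneg])
    rw [map_sub, map_sub, hb, hc] at a1 a2 a3 a4
    constructor
    · rw [← sub_nonneg]
      have e : z - (b + c) = (P z - (b - 0)) + ((z - (c - b)) - (P z - (0 - b))) := by abel
      rw [e]; exact add_nonneg a1 a4
    · rw [← sub_nonneg]
      have e : z - (-b - c) = ((z - (b - c)) - (P z - (b - 0))) + (P z - (0 - b)) := by abel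
      rw [e]; exact add_nonneg a2 a3

lemma ker_eq_dComp (hX : IsPreRiesz X) (P : X →ₗ[ℝ] X) (hPP : ∀ x, P (P x) = P x)
    (hp : IsPosMap P) (hq : ∀ x : X, 0 ≤ x → 0 ≤ x - P x) :
    (LinearMap.ker P : Set X) = dComp (Set.range ⇑P) := by
  have claim : ∀ d ∈ dComp (Set.range ⇑P), 0 ≤ P d := by
    intro d hd
    set b := P d with hbdef
    have hb : P b = b := hPP d
    have hdb : UDisjoint d b := hd b ⟨d, rfl⟩
    have char := udisjoint_iff.mp hdb
    apply nonneg_half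
    refine hX ({-d - b, d - b} : Set X) (b + b)
      ((Set.finite_singleton _).insert _) ⟨_, Set.mem_insert _ _⟩ ?_
    intro z hz
    rw [Set.image_insert_eq, Set.image_singleton, mem_ub_pair] at hz
    obtain ⟨hz1, hz2⟩ := hz
    -- hz1 : b + b + (-d - b) ≤ z, hz2 : b + b + (d - b) ≤ z
    have a1 : 0 ≤ P (z - (b + b + (-d - b))) := hp _ (by rwa [sub_nonneg])
    have a2 : 0 ≤ (z - (b + b + (d - b))) - P (z - (b + b + (d - b))) :=
      hq _ (by rwa [sub_nonneg])
    rw [map_sub, map_add, map_add, map_sub, map_neg, hb, ← hbdef] at a1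
    rw [map_sub, map_add, map_add, map_sub, hb, ← hbdef] at a2
    -- a1 : 0 ≤ P z - (b + b + (-b - b)), a2 : 0 ≤ z - (b+b+(d-b)) - (P z - (b+b+(b-b)))
    have hk : d - b ≤ z := by
      rw [← sub_nonneg]
      have e : z - (d - b) = (P z - (b + b + (-b - b)))
          + ((z - (b + b + (d - b))) - (P z - (b + b + (b - b)))) := by abel
      rw [e]; exact add_nonneg a1 a2
    have hnk : b - d ≤ z := le_of_eq_of_le (by abel : b - d = b + b + (-d - b)) hz1
    have hub := (char z).mpr ⟨hk, hnk⟩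
    rw [mem_ub_pair]
    exact ⟨le_of_eq_of_le (by abel : -d - b = -d - b) hub.2, hk⟩
  ext c
  constructor
  · intro hc
    have hc0 : P c = 0 := by simpa using hc
    intro s hs
    obtain ⟨y, rfl⟩ := hs
    exact (udisjoint_of_proj P hp hq (hPP y) hc0).symm
  · intro hc
    have h1 := claim c hc
    have hnc : -c ∈ dComp (Set.range ⇑P) := fun s hs => (hc s hs).neg_left
    have h2 := claim _ hnc
    rw [map_neg] at h2
    have : P c = 0 := le_antisymm (neg_nonneg.mp h2) h1
    simpa using this

lemma bandProj_of_pos (hX : IsPreRiesz X) (P : X →ₗ[ℝ] X) (h2 : P ∘ₗ P = P)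
    (hp : IsPosMap P) (hq : ∀ x : X, 0 ≤ x → 0 ≤ x - P x) : IsBandProj P := by
  have hPP : ∀ x, P (P x) = P x := fun x => LinearMap.ext_iff.mp h2 x
  have hkerEq := ker_eq_dComp hX P hPP hp hq
  set Q : X →ₗ[ℝ] X := LinearMap.id - P with hQdef
  have hQx : ∀ x, Q x = x - P x := fun x => rfl
  have hQQ : ∀ x, Q (Q x) = Q x := by
    intro x
    simp only [hQx, map_sub, hPP]
    abel
  have hQp : IsPosMap Q := fun x hx => by rw [hQx]; exact hq x hx
  have hQq : ∀ x : X, 0 ≤ x → 0 ≤ x - Q x := by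
    intro x hx
    rw [hQx, sub_sub_cancel]
    exact hp x hx
  have hkerQ := ker_eq_dComp hX Q hQQ hQp hQq
  have hrQ : Set.range ⇑Q = (LinearMap.ker P : Set X) := by
    ext x
    constructor
    · rintro ⟨y, rfl⟩
      simp only [SetLike.mem_coe, LinearMap.mem_ker, hQx, map_sub, hPP, sub_self]
    · intro hx
      have hx0 : P x = 0 := by simpa using hx
      exact ⟨x, by rw [hQx, hx0, sub_zero]⟩
  have hkQ : (LinearMap.ker Q : Set X) = Set.range ⇑P := by
    ext x
    constructor
    · intro hx
      have hx0 : x - P x = 0 := by simpa [hQx] using hx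
      exact ⟨x, (sub_eq_zero.mp hx0).symm⟩
    · rintro ⟨y, rfl⟩
      simp only [SetLike.mem_coe, LinearMap.mem_ker, hQx, hPP, sub_self]
  have hband : IsBand (Set.range ⇑P) := by
    unfold IsBand
    calc Set.range ⇑P = (LinearMap.ker Q : Set X) := hkQ.symm
      _ = dComp (Set.range ⇑Q) := hkerQ
      _ = dComp ((LinearMap.ker P : Set X)) := by rw [hrQ]
      _ = dComp (dComp (Set.range ⇑P)) := by rw [hkerEq]
  refine ⟨h2, ⟨hband, ?_, ?_⟩, hkerEq⟩
  · apply Set.eq_singleton_iff_unique_mem.mpr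
    constructor
    · constructor
      · exact ⟨0, map_zero P⟩
      · rw [← hkerEq]
        simp
    · rintro x ⟨⟨y, rfl⟩, hx2⟩
      rw [← hkerEq] at hx2
      have : P (P y) = 0 := by simpa using hx2
      rw [hPP] at this
      exact this
  · intro x
    refine ⟨P x, ⟨x, rfl⟩, x - P x, ?_, by abel⟩
    rw [← hkerEq]
    simp [map_sub, hPP]

lemma IsBandProj.posParts {P : X →ₗ[ℝ] X} (h : IsBandProj P) :
    IsPosMap P ∧ ∀ x : X, 0 ≤ x → 0 ≤ x - P x := by
  obtain ⟨h2, ⟨_, _, hdec⟩, hker⟩ := h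
  have hPP : ∀ x, P (P x) = P x := fun x => LinearMap.ext_iff.mp h2 x
  have key : ∀ x : X, 0 ≤ x → 0 ≤ P x ∧ 0 ≤ x - P x := by
    intro x hx
    obtain ⟨b, hb, c, hc, hxbc⟩ := hdec x
    obtain ⟨y, rfl⟩ := hb
    have hc0 : P c = 0 := by
      have : c ∈ (LinearMap.ker P : Set X) := hker ▸ hc
      simpa using this
    have hPx : P x = P y := by rw [hxbc, map_add, hPP, hc0, add_zero]
    have hdisj : UDisjoint (P y) c := (hc (P y) ⟨y, rfl⟩).symm
    have := hdisj.nonneg_parts (hxbc ▸ hx)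
    refine ⟨hPx ▸ this.1, ?_⟩
    rw [hPx, hxbc, add_sub_cancel_left]
    exact this.2
  exact ⟨fun x hx => (key x hx).1, fun x hx => (key x hx).2⟩

/-- If band projections `P₁, …, P_m` satisfy `Pᵢ Pⱼ = 0` for `i ≠ j`, then their sum is a
band projection. -/
theorem stmt_15 (hX : IsPreRiesz X) {m : ℕ} (P : Fin m → (X →ₗ[ℝ] X))
    (hP : ∀ i, IsBandProj (P i)) (hzero : ∀ i j, i ≠ j → P i ∘ₗ P j = 0) :
    IsBandProj (∑ i, P i) := by
  have hpos := fun i => (hP i).posParts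
  have happ : ∀ x : X, (∑ i, P i) x = ∑ i, P i x := fun x => by
    simp [LinearMap.sum_apply]
  have hz : ∀ i j (x : X), i ≠ j → P i (P j x) = 0 := by
    intro i j x hij
    have := LinearMap.ext_iff.mp (hzero i j hij) x
    simpa using this
  have hS2 : (∑ i, P i) ∘ₗ (∑ i, P i) = ∑ i, P i := by
    apply LinearMap.ext
    intro x
    have h : (∑ i, P i) ((∑ i, P i) x) = ∑ i, P i x := by
      rw [happ ((∑ i, P i) x), happ x]
      refine Finset.sum_congr rfl fun i _ => ?_
      rw [map_sum, Finset.sum_eq_single i (fun j _ hj => hz i j x (Ne.symm hj))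
        (fun h => absurd (Finset.mem_univ i) h)]
      exact LinearMap.ext_iff.mp (hP i).1 x
    simpa [LinearMap.comp_apply] using h
  have hSpos : IsPosMap (∑ i, P i) := by
    intro x hx
    rw [happ]
    exact Finset.sum_nonneg fun i _ => (hpos i).1 x hx
  have key : ∀ (s : Finset (Fin m)) (x : X), 0 ≤ x → 0 ≤ x - ∑ i ∈ s, P i x := by
    intro s
    induction s using Finset.induction_on with
    | empty => intro x hx; simpa using hx
    | @insert j s hj ih =>
      intro x hx
      have hy : 0 ≤ x - P j x := (hpos j).2 x hx
      have h1 := ih _ hy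
      have hsum : ∑ i ∈ s, P i (x - P j x) = ∑ i ∈ s, P i x := by
        refine Finset.sum_congr rfl fun i hi => ?_
        have hne : i ≠ j := fun h => hj (h ▸ hi)
        rw [map_sub, hz i j x hne, sub_zero]
      rw [hsum] at h1
      rw [Finset.sum_insert hj]
      have e : x - (P j x + ∑ i ∈ s, P i x) = (x - P j x) - ∑ i ∈ s, P i x := by abel
      rw [e]; exact h1
  have hSq : ∀ x : X, 0 ≤ x → 0 ≤ x - (∑ i, P i) x := by
    intro x hx
    rw [happ]
    exact key Finset.univ x hx
  exact bandProj_of_pos hX _ hS2 hSpos hSq
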